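/- arXiv:2504.18710 — 8 statements merged into one kernel-verified Lean document; each statement's English description precedes it below -/
import Mathlib

section
/- Let W : ℝⁿ → ℝᵐ be a surjective linear map with Moore–Penrose pseudoinverse W⁺, let b = -Wp for some p ∈ ℝⁿ, and set vᵢ = W⁺(eᵢ) for i = 1,…,m where eᵢ is the standard basis of ℝᵐ. Then for any x ∈ ℝⁿ written as x = p + x̃ + Σᵢ aᵢ vᵢ with x̃ ∈ ker W, the truncation map satisfies τ_{W,b}(x) = W⁺W p + Σ_{i : aᵢ > 0} aᵢ vᵢ. -/
noncomputable section

/-- Componentwise ReLU. -/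
def relu {m : ℕ} (y : EuclideanSpace ℝ (Fin m)) : EuclideanSpace ℝ (Fin m) :=
  WithLp.toLp 2 (fun i => max (y i) 0)

/-- Truncation map τ_{W,b}(x) = W⁺(σ(Wx + b) - b), with `Wp` playing the role of W⁺. -/
def trunc {n m : ℕ} (W : EuclideanSpace ℝ (Fin n) →ₗ[ℝ] EuclideanSpace ℝ (Fin m))
    (Wp : EuclideanSpace ℝ (Fin m) →ₗ[ℝ] EuclideanSpace ℝ (Fin n))
    (b : EuclideanSpace ℝ (Fin m)) (x : EuclideanSpace ℝ (Fin n)) :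
    EuclideanSpace ℝ (Fin n) :=
  Wp (relu (W x + b) - b)

lemma sum_smul_single {m : ℕ} (c : Fin m → ℝ) :
    (∑ i, c i • EuclideanSpace.single i (1 : ℝ)) = WithLp.toLp 2 c := by
  ext j
  simp [EuclideanSpace.single_apply, Pi.single_apply]

/-- action of the truncation map (Lemma, first formula). -/
theorem trunc_eq_of_decomp {n m : ℕ}
    (W : EuclideanSpace ℝ (Fin n) →ₗ[ℝ] EuclideanSpace ℝ (Fin m))
    (hW : Function.Surjective W)
    (Wp : EuclideanSpace ℝ (Fin m) →ₗ[ℝ] EuclideanSpace ℝ (Fin n))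
    -- Wp is the Moore–Penrose pseudoinverse of the surjective W:
    (hWWp : ∀ y, W (Wp y) = y)
    (hproj : ∀ x, Wp (W x) =
      (Submodule.orthogonalProjectionOnto (LinearMap.ker W)ᗮ x : EuclideanSpace ℝ (Fin n)))
    (p : EuclideanSpace ℝ (Fin n)) (b : EuclideanSpace ℝ (Fin m)) (hb : b = -(W p))
    (v : Fin m → EuclideanSpace ℝ (Fin n))
    (hv : ∀ i, v i = Wp (EuclideanSpace.single i (1 : ℝ)))
    (x xt : EuclideanSpace ℝ (Fin n)) (hxt : xt ∈ LinearMap.ker W)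
    (a : Fin m → ℝ)
    (hx : x = p + xt + ∑ i, a i • v i) :
    trunc W Wp b x =
      Wp (W p) + ∑ i ∈ Finset.univ.filter (fun i => 0 < a i), a i • v i := by
  have hWv : ∀ i, W (v i) = EuclideanSpace.single i (1 : ℝ) := fun i => by
    rw [hv]; exact hWWp _
  have hWx : W x + b = WithLp.toLp 2 (fun j => a j) := by
    rw [hx, hb]
    simp only [map_add, map_sum, map_smul, hWv, LinearMap.mem_ker.mp hxt]
    rw [sum_smul_single]
    abel
  have hrelu : relu (W x + b) = WithLp.toLp 2 (fun j => max (a j) 0) := by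
    rw [hWx]; rfl
  have hkey : WithLp.toLp 2 (fun j => max (a j) 0) =
      ∑ i ∈ Finset.univ.filter (fun i => 0 < a i), a i • EuclideanSpace.single i (1 : ℝ) := by
    rw [← sum_smul_single (fun j => max (a j) 0)]
    rw [← Finset.sum_filter_add_sum_filter_not Finset.univ (fun i => 0 < a i)]
    have h1 : ∑ i ∈ Finset.univ.filter (fun i => 0 < a i),
        max (a i) 0 • EuclideanSpace.single i (1:ℝ)
        = ∑ i ∈ Finset.univ.filter (fun i => 0 < a i),
        a i • EuclideanSpace.single i (1:ℝ) := by
      apply Finset.sum_congr rfl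
      intro i hi
      simp only [Finset.mem_filter] at hi
      rw [max_eq_left hi.2.le]
    have h2 : ∑ i ∈ Finset.univ.filter (fun i => ¬ 0 < a i),
        max (a i) 0 • EuclideanSpace.single i (1:ℝ) = 0 := by
      apply Finset.sum_eq_zero
      intro i hi
      simp only [Finset.mem_filter] at hi
      rw [max_eq_right (le_of_not_gt hi.2), zero_smul]
    rw [h1, h2, add_zero]
  rw [trunc, hrelu, hb, sub_neg_eq_add, map_add, hkey, map_sum]
  simp only [map_smul, ← hv]
  exact add_comm _ _
end
end

section
/- Let W : ℝⁿ → ℝᵐ be surjective, b = -Wp, and vᵢ = W⁺(eᵢ). For x = p + x̃ + Σᵢ aᵢ vᵢ with x̃ ∈ ker W, the truncation map satisfies τ_{W,b}(x) = W⁺W x - Σ_{j : aⱼ ≤ 0} aⱼ vⱼ. -/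
noncomputable section

theorem esum_apply {k m : ℕ} (s : Finset (Fin m)) (f : Fin m → EuclideanSpace ℝ (Fin k))
    (i : Fin k) : (∑ j ∈ s, f j) i = ∑ j ∈ s, f j i := by
  induction s using Finset.cons_induction with
  | empty => rfl
  | cons j s hj ih => rw [Finset.sum_cons, Finset.sum_cons, ← ih]; rfl

/-- action of the truncation map (Lemma, second formula). -/
theorem trunc_eq_of_decomp' {n m : ℕ}
    (W : EuclideanSpace ℝ (Fin n) →ₗ[ℝ] EuclideanSpace ℝ (Fin m))
    (hW : Function.Surjective W)
    (Wp : EuclideanSpace ℝ (Fin m) →ₗ[ℝ] EuclideanSpace ℝ (Fin n))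
    (hWWp : ∀ y, W (Wp y) = y)
    (hproj : ∀ x, Wp (W x) =
      (Submodule.orthogonalProjectionOnto (LinearMap.ker W)ᗮ x : EuclideanSpace ℝ (Fin n)))
    (p : EuclideanSpace ℝ (Fin n)) (b : EuclideanSpace ℝ (Fin m)) (hb : b = -(W p))
    (v : Fin m → EuclideanSpace ℝ (Fin n))
    (hv : ∀ i, v i = Wp (EuclideanSpace.single i (1 : ℝ)))
    (x xt : EuclideanSpace ℝ (Fin n)) (hxt : xt ∈ LinearMap.ker W)
    (a : Fin m → ℝ)
    (hx : x = p + xt + ∑ i, a i • v i) :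
    trunc W Wp b x =
      Wp (W x) - ∑ j ∈ Finset.univ.filter (fun j => a j ≤ 0), a j • v j := by

  have hWxb : W x + b = ∑ i, a i • EuclideanSpace.single i (1:ℝ) := by
    subst hx hb
    simp only [map_add, map_sum, map_smul, LinearMap.mem_ker.mp hxt, hv, hWWp]
    abel
  have hcoord : ∀ i, (W x + b) i = a i := by
    intro i
    rw [hWxb]
    rw [esum_apply]
    simp [EuclideanSpace.single_apply, Finset.sum_ite_eq, mul_comm]
  have hrelu : relu (W x + b) - b
      = W x - ∑ j ∈ Finset.univ.filter (fun j => a j ≤ 0),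
          a j • EuclideanSpace.single j (1:ℝ) := by
    ext i
    have hs : (∑ j ∈ Finset.univ.filter (fun j => a j ≤ 0),
        a j • EuclideanSpace.single j (1:ℝ)) i
        = if a i ≤ 0 then a i else 0 := by
      rw [esum_apply]
      simp [EuclideanSpace.single_apply, Finset.sum_ite_eq, mul_comm]
    have hWb : (W x) i = a i - b i := by
      have := hcoord i
      have h2 : (W x + b) i = (W x) i + b i := rfl
      rw [h2] at this; linarith
    have h3 : (relu (W x + b) - b) i = max (a i) 0 - b i := by
      show relu (W x + b) i - b i = max (a i) 0 - b i
      simp [relu, hWb]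
    have h4 : (W x - ∑ j ∈ Finset.univ.filter (fun j => a j ≤ 0),
        a j • EuclideanSpace.single j (1:ℝ)) i
        = (W x) i - (if a i ≤ 0 then a i else 0) := by
      rw [show (W x - ∑ j ∈ Finset.univ.filter (fun j => a j ≤ 0),
        a j • EuclideanSpace.single j (1:ℝ)) i = (W x) i -
        (∑ j ∈ Finset.univ.filter (fun j => a j ≤ 0),
        a j • EuclideanSpace.single j (1:ℝ)) i from rfl, hs]
    rw [h3, h4, hWb]
    rcases le_or_gt (a i) 0 with h | h
    · simp [h, max_eq_right h]
    · simp [not_le.mpr h, max_eq_left h.le]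
  rw [trunc, hrelu, map_sub, map_sum]
  congr 1
  refine Finset.sum_congr rfl fun j _ => ?_
  rw [map_smul, hv j]
end
end

section
/- Given p ∈ ℝⁿ and a linearly independent family (vᵢ)_{i=1}^m in ℝⁿ with m ≤ n, there exist a surjective linear map W : ℝⁿ → ℝᵐ and b ∈ ℝᵐ such that for every x ∈ ℝⁿ decomposed as x = p + ṽ + Σᵢ aᵢ vᵢ with ṽ ∈ (span{v₁,…,v_m})^⊥, one has τ_{W,b}(x) = W⁺W p + Σ_{i : aᵢ > 0} aᵢ vᵢ. -/
noncomputable section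

/-- converse direction of the Lemma — realizing a prescribed cone. -/
theorem exists_trunc_of_cone {n m : ℕ} (hmn : m ≤ n)
    (p : EuclideanSpace ℝ (Fin n)) (v : Fin m → EuclideanSpace ℝ (Fin n))
    (hv : LinearIndependent ℝ v) :
    ∃ (W : EuclideanSpace ℝ (Fin n) →ₗ[ℝ] EuclideanSpace ℝ (Fin m))
      (Wp : EuclideanSpace ℝ (Fin m) →ₗ[ℝ] EuclideanSpace ℝ (Fin n))
      (b : EuclideanSpace ℝ (Fin m)),
      Function.Surjective W ∧
      -- Wp is the Moore–Penrose pseudoinverse of W: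
      (∀ y, W (Wp y) = y) ∧
      (∀ x, Wp (W x) =
        (Submodule.orthogonalProjection (LinearMap.ker W)ᗮ x : EuclideanSpace ℝ (Fin n))) ∧
      ∀ (x vt : EuclideanSpace ℝ (Fin n)) (a : Fin m → ℝ),
        vt ∈ (Submodule.span ℝ (Set.range v))ᗮ →
        x = p + vt + ∑ i, a i • v i →
        trunc W Wp b x =
          Wp (W p) + ∑ i ∈ Finset.univ.filter (fun i => 0 < a i), a i • v i := by
  classical
  set V := Submodule.span ℝ (Set.range v) with hV
  have hvV : ∀ i, v i ∈ V := fun i => Submodule.subset_span ⟨i, rfl⟩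
  let B : Module.Basis (Fin m) ℝ V := Module.Basis.span hv
  let L : (Fin m → ℝ) ≃ₗ[ℝ] EuclideanSpace ℝ (Fin m) :=
    (WithLp.linearEquiv 2 ℝ (Fin m → ℝ)).symm
  have hL : ∀ (y : Fin m → ℝ) (j : Fin m), L y j = y j := fun _ _ => rfl
  have hLs : ∀ (y : EuclideanSpace ℝ (Fin m)) (j : Fin m), L.symm y j = y j := fun _ _ => rfl
  let W : EuclideanSpace ℝ (Fin n) →ₗ[ℝ] EuclideanSpace ℝ (Fin m) :=
    (L.toLinearMap ∘ₗ B.equivFun.toLinearMap) ∘ₗ (Submodule.orthogonalProjection V).toLinearMap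
  let Wp : EuclideanSpace ℝ (Fin m) →ₗ[ℝ] EuclideanSpace ℝ (Fin n) :=
    (V.subtype ∘ₗ B.equivFun.symm.toLinearMap) ∘ₗ L.symm.toLinearMap
  have hWapp : ∀ x, W x = L (B.equivFun (Submodule.orthogonalProjection V x)) := fun _ => rfl
  have hWpapp' : ∀ y, Wp y = (B.equivFun.symm (L.symm y) : EuclideanSpace ℝ (Fin n)) :=
    fun _ => rfl
  have hWWp : ∀ y, W (Wp y) = y := by
    intro y
    rw [hWpapp', hWapp]
    rw [Submodule.orthogonalProjection_mem_subspace_eq_self, LinearEquiv.apply_symm_apply,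
      LinearEquiv.apply_symm_apply]
  have hWpapp : ∀ y : EuclideanSpace ℝ (Fin m), Wp y = ∑ i, y i • v i := by
    intro y
    rw [hWpapp', Module.Basis.equivFun_symm_apply, Submodule.coe_sum]
    refine Finset.sum_congr rfl fun i _ => ?_
    rw [Submodule.coe_smul, hLs]
    congr 1
    exact congrArg Subtype.val (Module.Basis.span_apply hv i)
  have hWv : ∀ i j, W (v i) j = if i = j then 1 else 0 := by
    intro i j
    have h1 : Submodule.orthogonalProjection V (v i) = B i := by
      have h2 : ((⟨v i, hvV i⟩ : V) : EuclideanSpace ℝ (Fin n)) = v i := rfl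
      have h3 := Submodule.orthogonalProjection_mem_subspace_eq_self (⟨v i, hvV i⟩ : V)
      rw [h2] at h3
      rw [h3]
      exact Subtype.ext (congrArg Subtype.val (Module.Basis.span_apply hv i)).symm
    rw [hWapp, h1, hL, Module.Basis.equivFun_self]
  have hWvt : ∀ z, z ∈ Vᗮ → W z = 0 := by
    intro z hz
    rw [hWapp, Submodule.orthogonalProjectionOnto_apply_of_mem_orthogonal hz]
    simp
  have hker : LinearMap.ker W = Vᗮ := by
    ext x
    rw [LinearMap.mem_ker, hWapp, LinearEquiv.map_eq_zero_iff, LinearEquiv.map_eq_zero_iff]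
    exact Submodule.orthogonalProjectionOnto_eq_zero_iff
  have hproj : ∀ x, Wp (W x) = (Submodule.orthogonalProjection V x : EuclideanSpace ℝ (Fin n)) := by
    intro x
    rw [hWapp, hWpapp', LinearEquiv.symm_apply_apply, LinearEquiv.symm_apply_apply]
  refine ⟨W, Wp, -(W p), fun y => ⟨Wp y, hWWp y⟩, hWWp, ?_, ?_⟩
  · intro x
    have h2 : V = (LinearMap.ker W)ᗮ := by
      rw [hker, Submodule.orthogonal_orthogonal]
    rw [hproj x]
    exact (fun (K K' : Submodule ℝ (EuclideanSpace ℝ (Fin n))) (_ : K.HasOrthogonalProjection)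
      (_ : K'.HasOrthogonalProjection) (h : K = K') (x : EuclideanSpace ℝ (Fin n)) =>
      (by subst h; rfl : (Submodule.orthogonalProjection K x : EuclideanSpace ℝ (Fin n)) =
        Submodule.orthogonalProjection K' x)) V _ _ _ h2 x
  · intro x vt a hvt hx
    have hWx : ∀ j, (W x + -(W p)) j = a j := by
      intro j
      have h1 : W x = W p + W vt + W (∑ i, a i • v i) := by rw [hx]; simp
      rw [PiLp.add_apply, PiLp.neg_apply, h1, hWvt vt hvt, map_sum]
      rw [PiLp.add_apply, PiLp.add_apply, PiLp.zero_apply]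
      have h2 : (∑ i, W (a i • v i)) j = ∑ i, (W (a i • v i)) j :=
        by rw [WithLp.ofLp_sum]; exact Finset.sum_apply j Finset.univ _
      rw [h2]
      have h3 : ∀ i, (W (a i • v i)) j = a i * (if i = j then 1 else 0) := by
        intro i
        rw [map_smul, PiLp.smul_apply, hWv, smul_eq_mul]
      simp [h3, hWv]
    have hrelu : relu (W x + -(W p)) - -(W p)
        = L (fun j => max (a j) 0) + W p := by
      ext j
      rw [PiLp.sub_apply, PiLp.add_apply, PiLp.neg_apply]
      have : relu (W x + -(W p)) j = max ((W x + -(W p)) j) 0 := rfl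
      rw [this, hWx j, hL]
      ring
    rw [trunc, hrelu, map_add, hWpapp (L fun j => max (a j) 0)]
    rw [add_comm]
    congr 1
    rw [Finset.sum_filter]
    refine Finset.sum_congr rfl fun i _ => ?_
    rw [hL]
    by_cases h : 0 < a i
    · rw [if_pos h, max_eq_left h.le]
    · rw [if_neg h, max_eq_right (not_lt.mp h), zero_smul]
end
end

section
/- Let W : ℝⁿ → ℝᵐ be surjective, b = -Wp, vᵢ = W⁺(eᵢ). If two points x₁, x₂ ∈ ℝⁿ with coordinate decompositions xₖ = p + x̃ₖ + Σᵢ aᵢ(xₖ) vᵢ (x̃ₖ ∈ ker W) satisfy max(aᵢ(x₁), 0) = max(aᵢ(x₂), 0) for all i = 1,…,m, then τ_{W,b}(x₁) = τ_{W,b}(x₂). -/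
noncomputable section

/-- points with the same positive parts of coordinates truncate to the
same point. -/
theorem trunc_eq_of_posParts_eq {n m : ℕ}
    (W : EuclideanSpace ℝ (Fin n) →ₗ[ℝ] EuclideanSpace ℝ (Fin m))
    (hW : Function.Surjective W)
    (Wp : EuclideanSpace ℝ (Fin m) →ₗ[ℝ] EuclideanSpace ℝ (Fin n))
    (hWWp : ∀ y, W (Wp y) = y)
    (hproj : ∀ x, Wp (W x) =
      (Submodule.orthogonalProjectionOnto (LinearMap.ker W)ᗮ x : EuclideanSpace ℝ (Fin n)))
    (p : EuclideanSpace ℝ (Fin n)) (b : EuclideanSpace ℝ (Fin m)) (hb : b = -(W p))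
    (v : Fin m → EuclideanSpace ℝ (Fin n))
    (hv : ∀ i, v i = Wp (EuclideanSpace.single i (1 : ℝ)))
    (x₁ x₂ xt₁ xt₂ : EuclideanSpace ℝ (Fin n))
    (hxt₁ : xt₁ ∈ LinearMap.ker W) (hxt₂ : xt₂ ∈ LinearMap.ker W)
    (a₁ a₂ : Fin m → ℝ)
    (hx₁ : x₁ = p + xt₁ + ∑ i, a₁ i • v i)
    (hx₂ : x₂ = p + xt₂ + ∑ i, a₂ i • v i)
    (hpos : ∀ i, max (a₁ i) 0 = max (a₂ i) 0) :
    trunc W Wp b x₁ = trunc W Wp b x₂ := by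
  have key : ∀ (xt : EuclideanSpace ℝ (Fin n)), xt ∈ LinearMap.ker W →
      ∀ (a : Fin m → ℝ) (j : Fin m),
      (W (p + xt + ∑ i, a i • v i) + b) j = a j := by
    intro xt hxt a j
    have hWv : ∀ i, W (v i) = EuclideanSpace.single i (1 : ℝ) := fun i => by
      rw [hv i, hWWp]
    have : W (p + xt + ∑ i, a i • v i) + b
        = ∑ i, a i • EuclideanSpace.single i (1 : ℝ) := by
      rw [hb]
      simp only [map_add, map_sum, map_smul, hWv, LinearMap.mem_ker.mp hxt]
      abel
    rw [this]
    have : (∑ i, a i • EuclideanSpace.single i (1 : ℝ)) j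
        = ∑ i, (a i • EuclideanSpace.single i (1 : ℝ)) j := by
      rw [WithLp.ofLp_sum]
      exact Finset.sum_apply j Finset.univ _
    rw [this]
    simp [EuclideanSpace.single_apply]
  have hrel : relu (W x₁ + b) = relu (W x₂ + b) := by
    ext j
    simp only [relu, PiLp.toLp_apply, hx₁, hx₂, key xt₁ hxt₁ a₁ j, key xt₂ hxt₂ a₂ j, hpos j]
  simp [trunc, hrel]
end
end

section
/- Consider a feedforward ReLU network x⁽⁰⁾ = x, x⁽ˡ⁾ = σ(W_ℓ x⁽ˡ⁻¹⁾ + b_ℓ) for ℓ = 1,…,L−1, x⁽ᴸ⁾ = W_L x⁽ᴸ⁻¹⁾ + b_L, where all W_ℓ : ℝ^{d_{ℓ−1}} → ℝ^{d_ℓ} are surjective. Define cumulative parameters W⁽¹⁾ = W₁, W⁽ˡ⁾ = W_ℓ W⁽ˡ⁻¹⁾, b⁽¹⁾ = b₁, b⁽ˡ⁾ = W_ℓ b⁽ˡ⁻¹⁾ + b_ℓ, and truncated iterates x⁽ᵗ,⁰⁾ = x, x⁽ᵗ,ˡ⁾ = τ_{W⁽ˡ⁾, b⁽ˡ⁾}(x⁽ᵗ,ˡ⁻¹⁾).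 Then x⁽ˡ⁾ = W⁽ˡ⁾ x⁽ᵗ,ˡ⁾ + b⁽ˡ⁾ for ℓ = 1,…,L−1, and x⁽ᴸ⁾ = W⁽ᴸ⁾ x⁽ᵗ,ᴸ⁻¹⁾ + b⁽ᴸ⁾. -/
noncomputable section

/-- a feedforward ReLU network with surjective weights is described by
truncation maps and cumulative parameters. Here the network has L = M + 1 layers; weights
are indexed by ℓ = 0, …, M (so layer ℓ of the paper corresponds to index ℓ - 1). -/
theorem network_eq_truncations {M : ℕ} (d : ℕ → ℕ)
    (W : ∀ ℓ : ℕ, EuclideanSpace ℝ (Fin (d ℓ)) →ₗ[ℝ] EuclideanSpace ℝ (Fin (d (ℓ + 1))))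
    (b : ∀ ℓ : ℕ, EuclideanSpace ℝ (Fin (d (ℓ + 1))))
    (hsurj : ∀ ℓ ≤ M, Function.Surjective (W ℓ))
    -- cumulative weights W⁽ˡ⁾ and biases b⁽ˡ⁾:
    (Wc : ∀ ℓ : ℕ, EuclideanSpace ℝ (Fin (d 0)) →ₗ[ℝ] EuclideanSpace ℝ (Fin (d (ℓ + 1))))
    (bc : ∀ ℓ : ℕ, EuclideanSpace ℝ (Fin (d (ℓ + 1))))
    (hWc0 : Wc 0 = W 0) (hWcS : ∀ ℓ, Wc (ℓ + 1) = (W (ℓ + 1)).comp (Wc ℓ))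
    (hbc0 : bc 0 = b 0) (hbcS : ∀ ℓ, bc (ℓ + 1) = W (ℓ + 1) (bc ℓ) + b (ℓ + 1))
    -- Moore–Penrose pseudoinverses of the cumulative weights:
    (Wpc : ∀ ℓ : ℕ, EuclideanSpace ℝ (Fin (d (ℓ + 1))) →ₗ[ℝ] EuclideanSpace ℝ (Fin (d 0)))
    (hWpc₁ : ∀ ℓ ≤ M, ∀ y, Wc ℓ (Wpc ℓ y) = y)
    (hWpc₂ : ∀ ℓ ≤ M, ∀ x, Wpc ℓ (Wc ℓ x) =
      (Submodule.orthogonalProjection (LinearMap.ker (Wc ℓ))ᗮ x : EuclideanSpace ℝ (Fin (d 0))))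
    -- the input, the layer outputs x⁽ˡ⁾, and the truncated iterates x⁽ᵗ'ˡ⁾:
    (x : EuclideanSpace ℝ (Fin (d 0)))
    (xl : ∀ ℓ : ℕ, EuclideanSpace ℝ (Fin (d ℓ)))
    (hxl0 : xl 0 = x)
    (hxlS : ∀ ℓ : ℕ, ℓ + 1 ≤ M → xl (ℓ + 1) = relu (W ℓ (xl ℓ) + b ℓ))
    (xt : ∀ ℓ : ℕ, EuclideanSpace ℝ (Fin (d 0)))
    (hxt0 : xt 0 = x)
    (hxtS : ∀ ℓ : ℕ, ℓ + 1 ≤ M → xt (ℓ + 1) = trunc (Wc ℓ) (Wpc ℓ) (bc ℓ) (xt ℓ)) :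
    -- x⁽ˡ⁾ = W⁽ˡ⁾ x⁽ᵗ'ˡ⁾ + b⁽ˡ⁾ for the hidden layers, and the analogous final formula:
    (∀ ℓ : ℕ, ℓ + 1 ≤ M → xl (ℓ + 1) = Wc ℓ (xt (ℓ + 1)) + bc ℓ) ∧
    W M (xl M) + b M = Wc M (xt M) + bc M := by
  have key : ∀ ℓ : ℕ, ℓ ≤ M → W ℓ (xl ℓ) + b ℓ = Wc ℓ (xt ℓ) + bc ℓ := by
    intro ℓ
    induction ℓ with
    | zero => intro _; rw [hxl0, hxt0, hWc0, hbc0]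
    | succ n ih =>
      intro hn
      have hnM : n ≤ M := Nat.le_of_succ_le hn
      have hn1 : n + 1 ≤ M := hn
      have h1 : Wc n (xt (n + 1)) = relu (Wc n (xt n) + bc n) - bc n := by
        rw [hxtS n hn1, trunc, hWpc₁ n hnM]
      have h2 : xl (n + 1) = relu (Wc n (xt n) + bc n) := by
        rw [hxlS n hn1, ih hnM]
      rw [hWcS, hbcS, LinearMap.comp_apply, h1, h2, map_sub]
      abel
  refine ⟨fun ℓ hℓ => ?_, key M le_rfl⟩
  have hℓM : ℓ ≤ M := Nat.le_of_succ_le hℓ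
  have h1 : Wc ℓ (xt (ℓ + 1)) = relu (Wc ℓ (xt ℓ) + bc ℓ) - bc ℓ := by
    rw [hxtS ℓ hℓ, trunc, hWpc₁ ℓ hℓM]
  rw [hxlS ℓ hℓ, key ℓ hℓM, h1]
  abel
end
end

section
/- Let 𝒳 = 𝒳₁ ∪ 𝒳₂ ⊂ ℝⁿ be disjoint finite sets, p ∈ ℝⁿ, and (vᵢ)_{i=1}^m linearly independent vectors with m ≤ n. Suppose 𝒳₁ ⊂ 𝒮₋(p, v) = {p + Σᵢ aᵢ vᵢ + ṽ : all aᵢ ≤ 0, ṽ ∈ (span vᵢ)^⊥} and 𝒳₂ ∩ 𝒮₋(p, v) = ∅. Then there exist a surjective W ∈ ℝ^{m×n} and b ∈ ℝᵐ such that the truncated sets τ_{W,b}(𝒳₁) and τ_{W,b}(𝒳₂) are linearly separable: there exist u ∈ ℝⁿ, c ∈ ℝ with ⟨u, τ_{W,b}(x)⟩ < c for all x ∈ 𝒳₁ and ⟨u, τ_{W,b}(x)⟩ > c for all x ∈ 𝒳₂. -/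
open RealInnerProductSpace


noncomputable section

private lemma proj_congr {E : Type*} [NormedAddCommGroup E] [InnerProductSpace ℝ E]
    {K₁ K₂ : Submodule ℝ E} [K₁.HasOrthogonalProjection] [K₂.HasOrthogonalProjection]
    (h : K₁ = K₂) (x : E) :
    (K₁.orthogonalProjection x : E) = K₂.orthogonalProjection x := by
  subst h; rfl

/-- data separated by a polyhedral cone becomes linearly separable after
one truncation map. -/
theorem trunc_linearly_separable {n m : ℕ} (hmn : m ≤ n)
    (X₁ X₂ : Set (EuclideanSpace ℝ (Fin n)))
    (hX₁ : X₁.Finite) (hX₂ : X₂.Finite) (hdisj : Disjoint X₁ X₂)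
    (p : EuclideanSpace ℝ (Fin n)) (v : Fin m → EuclideanSpace ℝ (Fin n))
    (hv : LinearIndependent ℝ v)
    -- the cone 𝒮₋(p, v):
    (Sminus : Set (EuclideanSpace ℝ (Fin n)))
    (hS : Sminus = {y | ∃ (a : Fin m → ℝ) (vt : EuclideanSpace ℝ (Fin n)),
      (∀ i, a i ≤ 0) ∧ vt ∈ (Submodule.span ℝ (Set.range v))ᗮ ∧
      y = p + (∑ i, a i • v i) + vt})
    (hX₁S : X₁ ⊆ Sminus) (hX₂S : X₂ ∩ Sminus = ∅) :
    ∃ (W : EuclideanSpace ℝ (Fin n) →ₗ[ℝ] EuclideanSpace ℝ (Fin m))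
      (Wp : EuclideanSpace ℝ (Fin m) →ₗ[ℝ] EuclideanSpace ℝ (Fin n))
      (b : EuclideanSpace ℝ (Fin m)),
      Function.Surjective W ∧
      (∀ y, W (Wp y) = y) ∧
      (∀ x, Wp (W x) =
        (Submodule.orthogonalProjection (LinearMap.ker W)ᗮ x : EuclideanSpace ℝ (Fin n))) ∧
      ∃ (u : EuclideanSpace ℝ (Fin n)) (c : ℝ),
        (∀ x ∈ X₁, (inner ℝ u (trunc W Wp b x) : ℝ) < c) ∧
        (∀ x ∈ X₂, c < (inner ℝ u (trunc W Wp b x) : ℝ)) := by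
  classical
  set K : Submodule ℝ (EuclideanSpace ℝ (Fin n)) := Submodule.span ℝ (Set.range v) with hK
  let B : Module.Basis (Fin m) ℝ K := Module.Basis.span hv
  let cf : Fin m → StrongDual ℝ K := fun i => LinearMap.toContinuousLinearMap (B.coord i)
  let w : Fin m → EuclideanSpace ℝ (Fin n) :=
    fun i => ((InnerProductSpace.toDual ℝ K).symm (cf i) : K)
  have hwK : ∀ i, w i ∈ K := fun i =>
    ((InnerProductSpace.toDual ℝ K).symm (cf i)).2
  have hw_inner : ∀ i (y : K), ⟪w i, (y : EuclideanSpace ℝ (Fin n))⟫ = B.coord i y := by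
    intro i y
    have h1 : ⟪w i, (y : EuclideanSpace ℝ (Fin n))⟫
        = inner ℝ ((InnerProductSpace.toDual ℝ K).symm (cf i)) y :=
      (Submodule.coe_inner K _ y).symm
    rw [h1, InnerProductSpace.toDual_symm_apply]
    rfl
  have hdual : ∀ i j, ⟪w i, v j⟫ = if j = i then 1 else 0 := by
    intro i j
    have h2 : v j = ((B j : K) : EuclideanSpace ℝ (Fin n)) := congrArg Subtype.val (Module.Basis.span_apply hv j).symm
    rw [h2, hw_inner i (B j)]
    simp [Module.Basis.coord_apply, Module.Basis.repr_self, Finsupp.single_apply]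
  have hrep : ∀ y : K, (∑ i, ⟪w i, (y : EuclideanSpace ℝ (Fin n))⟫ • v i) = y := by
    intro y
    calc (∑ i, ⟪w i, (y : EuclideanSpace ℝ (Fin n))⟫ • v i)
        = ∑ i, (B.repr y i) • v i := by
          refine Finset.sum_congr rfl fun i _ => ?_
          rw [hw_inner i y]; rfl
      _ = ((∑ i, (B.repr y i) • B i : K) : EuclideanSpace ℝ (Fin n)) := by
          push_cast
          refine Finset.sum_congr rfl fun i _ => ?_
          rw [Module.Basis.span_apply hv i]
      _ = y := by rw [B.sum_repr y]
  have hP : ∀ x, (∑ i, ⟪w i, x⟫ • v i)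
      = (Submodule.orthogonalProjection K x : EuclideanSpace ℝ (Fin n)) := by
    intro x
    have hmem : x - (Submodule.orthogonalProjection K x : EuclideanSpace ℝ (Fin n)) ∈ Kᗮ :=
      Submodule.sub_starProjection_mem_orthogonal (K := K) x
    have h3 : ∀ i, ⟪w i, x⟫
        = ⟪w i, ((Submodule.orthogonalProjection K x : K) : EuclideanSpace ℝ (Fin n))⟫ := by
      intro i
      have hz : ⟪w i, x - (Submodule.orthogonalProjection K x : EuclideanSpace ℝ (Fin n))⟫ = 0 :=
        (Submodule.mem_orthogonal K _).1 hmem (w i) (hwK i)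
      rw [inner_sub_right] at hz
      linarith
    calc (∑ i, ⟪w i, x⟫ • v i)
        = ∑ i, ⟪w i, ((Submodule.orthogonalProjection K x : K) : EuclideanSpace ℝ (Fin n))⟫ • v i := by
          refine Finset.sum_congr rfl fun i _ => by rw [h3 i]
      _ = _ := hrep (Submodule.orthogonalProjection K x)
  let W : EuclideanSpace ℝ (Fin n) →ₗ[ℝ] EuclideanSpace ℝ (Fin m) :=
    { toFun := fun x => WithLp.toLp 2 (fun i => ⟪w i, x⟫)
      map_add' := by intro x y; ext i; simp [inner_add_right]
      map_smul' := by
        intro c x; ext i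
        show ⟪w i, c • x⟫ = c * ⟪w i, x⟫
        exact real_inner_smul_right _ _ _ }
  let Wp : EuclideanSpace ℝ (Fin m) →ₗ[ℝ] EuclideanSpace ℝ (Fin n) :=
    { toFun := fun y => ∑ i, y i • v i
      map_add' := by
        intro x y
        show (∑ i, (x i + y i) • v i) = _
        simp [add_smul, Finset.sum_add_distrib]
      map_smul' := by
        intro c x
        show (∑ i, (c * x i) • v i) = _
        simp [smul_smul, Finset.smul_sum] }
  have hWapp : ∀ x i, W x i = ⟪w i, x⟫ := fun _ _ => rfl
  have hWpapp : ∀ y, Wp y = ∑ i, y i • v i := fun _ => rfl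
  -- key inner computation
  have hinner_sum : ∀ i (a : Fin m → ℝ), ⟪w i, ∑ j, a j • v j⟫ = a i := by
    intro i a
    rw [inner_sum]
    simp only [real_inner_smul_right, hdual, mul_ite, mul_one, mul_zero,
      Finset.sum_ite_eq', Finset.mem_univ, if_true]
  have hWWp : ∀ y, W (Wp y) = y := by
    intro y
    ext i
    rw [hWapp, hWpapp, hinner_sum]
  have hWpW : ∀ x, Wp (W x) = (Submodule.orthogonalProjection K x : EuclideanSpace ℝ (Fin n)) := by
    intro x
    rw [hWpapp, ← hP x]
    exact Finset.sum_congr rfl fun i _ => rfl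
  have hker : LinearMap.ker W = Kᗮ := by
    ext x
    simp only [LinearMap.mem_ker]
    constructor
    · intro hx
      have h0 : (Submodule.orthogonalProjection K x : EuclideanSpace ℝ (Fin n)) = 0 := by
        rw [← hP]
        refine Finset.sum_eq_zero fun i _ => ?_
        have hxi : ⟪w i, x⟫ = 0 := congrArg (fun z => z i) hx
        rw [hxi, zero_smul]
      have h4 : x - (Submodule.orthogonalProjection K x : EuclideanSpace ℝ (Fin n)) ∈ Kᗮ :=
        Submodule.sub_starProjection_mem_orthogonal (K := K) x
      rwa [h0, sub_zero] at h4
    · intro hx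
      ext i
      exact (Submodule.mem_orthogonal K x).1 hx (w i) (hwK i)
  have hkerperp : (LinearMap.ker W)ᗮ = K := by
    rw [hker, Submodule.orthogonal_orthogonal]
  refine ⟨W, Wp, -(W p), ?_, hWWp, ?_, ?_⟩
  · intro y; exact ⟨Wp y, hWWp y⟩
  · intro x
    rw [hWpW x]
    exact (proj_congr hkerperp x).symm
  · set q : EuclideanSpace ℝ (Fin n) := (Submodule.orthogonalProjection K p : EuclideanSpace ℝ (Fin n))
      with hq
    set u : EuclideanSpace ℝ (Fin n) := ∑ i, w i with hu
    have huv : ∀ i, ⟪u, v i⟫ = 1 := by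
      intro i
      rw [hu, sum_inner]
      simp only [hdual, Finset.sum_ite_eq, Finset.mem_univ, if_true]
    have htr1 : ∀ x ∈ X₁, trunc W Wp (-(W p)) x = q := by
      intro x hx
      have hxS := hX₁S hx
      rw [hS] at hxS
      obtain ⟨a, vt, ha, hvt, hxeq⟩ := hxS
      have hvt0 : ∀ i, ⟪w i, vt⟫ = 0 := fun i =>
        (Submodule.mem_orthogonal K vt).1 hvt (w i) (hwK i)
      have hWx : W x + -(W p) = WithLp.toLp 2 (fun i => a i) := by
        ext i
        show ⟪w i, x⟫ + -⟪w i, p⟫ = a i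
        rw [hxeq, inner_add_right, inner_add_right, hinner_sum, hvt0]
        ring
      have hrelu : relu (W x + -(W p)) = 0 := by
        ext i
        show max ((W x + -(W p)) i) 0 = 0
        rw [hWx]
        exact max_eq_right (ha i)
      unfold trunc
      rw [hrelu, zero_sub, neg_neg, hWpW p]
    have htr2 : ∀ x ∈ X₂, ⟪u, q⟫ < (inner ℝ u (trunc W Wp (-(W p)) x) : ℝ) := by
      intro x hx
      set a : Fin m → ℝ := fun i => ⟪w i, x - p⟫ with haa
      have hWxb : W x + -(W p) = WithLp.toLp 2 (fun i => a i) := by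
        ext i
        show ⟪w i, x⟫ + -⟪w i, p⟫ = ⟪w i, x - p⟫
        rw [inner_sub_right]
        ring
      have hxnS : x ∉ Sminus := by
        intro hmem
        have hcontra : x ∈ X₂ ∩ Sminus := ⟨hx, hmem⟩
        rw [hX₂S] at hcontra
        exact hcontra
      have hjex : ∃ j, 0 < a j := by
        by_contra hcon
        push_neg at hcon
        apply hxnS
        rw [hS]
        refine ⟨a, x - p - ∑ i, a i • v i, hcon, ?_, by abel⟩
        have h5 : (∑ i, a i • v i)
            = (Submodule.orthogonalProjection K (x - p) : EuclideanSpace ℝ (Fin n)) := hP (x - p)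
        rw [h5]
        exact Submodule.sub_starProjection_mem_orthogonal (K := K) (x - p)
      obtain ⟨j, hj⟩ := hjex
      have htr : trunc W Wp (-(W p)) x = (∑ i, max (a i) 0 • v i) + q := by
        unfold trunc
        rw [hWxb]
        have h6 : relu (WithLp.toLp 2 (fun i => a i)) - -(W p)
            = ((WithLp.toLp 2 (fun i => max (a i) 0) : EuclideanSpace ℝ (Fin m)) + W p) := by
          ext i
          show max (a i) 0 - (-(W p i)) = max (a i) 0 + W p i
          ring
        rw [h6, map_add, hWpW p]
        congr 1
      rw [htr, inner_add_right, inner_sum]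
      simp only [real_inner_smul_right, huv, mul_one]
      have hle : max (a j) 0 ≤ ∑ i, max (a i) 0 :=
        Finset.single_le_sum (f := fun i => max (a i) 0)
          (fun i _ => le_max_right _ _) (Finset.mem_univ j)
      have hpos : (0:ℝ) < max (a j) 0 := lt_max_of_lt_left hj
      linarith
    by_cases hne : X₂.Nonempty
    · set T : Finset ℝ :=
        hX₂.toFinset.image (fun x => (inner ℝ u (trunc W Wp (-(W p)) x) : ℝ)) with hT
      have hTne : T.Nonempty :=
        ((Set.Finite.toFinset_nonempty hX₂).2 hne).image _
      set μ := T.min' hTne with hμ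
      have hμgt : ⟪u, q⟫ < μ := by
        obtain ⟨x, hxT, hxeq⟩ := Finset.mem_image.1 (T.min'_mem hTne)
        rw [hμ, ← hxeq]
        exact htr2 x (hX₂.mem_toFinset.1 hxT)
      refine ⟨u, (⟪u, q⟫ + μ)/2, ?_, ?_⟩
      · intro x hx
        rw [htr1 x hx]
        linarith
      · intro x hx
        have hmin : μ ≤ (inner ℝ u (trunc W Wp (-(W p)) x) : ℝ) := by
          apply T.min'_le
          rw [hT]
          exact Finset.mem_image_of_mem _ (hX₂.mem_toFinset.2 hx)
        linarith
    · refine ⟨u, ⟪u, q⟫ + 1, ?_, ?_⟩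
      · intro x hx
        rw [htr1 x hx]
        linarith
      · intro x hx
        exact absurd ⟨x, hx⟩ hne
end
end

section
/- Let W : ℝⁿ → ℝᵐ be surjective, b = -Wp, vᵢ = W⁺(eᵢ). If x ∈ ℝⁿ decomposes as x = p + x̃ + Σᵢ aᵢ vᵢ with x̃ ∈ ker W and aᵢ > 0 for some index i, then τ_{W,b}(x) ≠ W⁺W p. -/
noncomputable section

/-- a point with some positive coordinate is not truncated to W⁺Wp. -/
theorem trunc_ne_of_pos_coord {n m : ℕ}
    (W : EuclideanSpace ℝ (Fin n) →ₗ[ℝ] EuclideanSpace ℝ (Fin m))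
    (hW : Function.Surjective W)
    (Wp : EuclideanSpace ℝ (Fin m) →ₗ[ℝ] EuclideanSpace ℝ (Fin n))
    (hWWp : ∀ y, W (Wp y) = y)
    (hproj : ∀ x, Wp (W x) =
      (Submodule.orthogonalProjectionOnto (LinearMap.ker W)ᗮ x : EuclideanSpace ℝ (Fin n)))
    (p : EuclideanSpace ℝ (Fin n)) (b : EuclideanSpace ℝ (Fin m)) (hb : b = -(W p))
    (v : Fin m → EuclideanSpace ℝ (Fin n))
    (hv : ∀ i, v i = Wp (EuclideanSpace.single i (1 : ℝ)))
    (x xt : EuclideanSpace ℝ (Fin n)) (hxt : xt ∈ LinearMap.ker W)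
    (a : Fin m → ℝ)
    (hx : x = p + xt + ∑ i, a i • v i)
    (hpos : ∃ i, 0 < a i) :
    trunc W Wp b x ≠ Wp (W p) := by
  obtain ⟨i0, hi0⟩ := hpos
  have hWx : W x + b = ∑ i, a i • EuclideanSpace.single i (1 : ℝ) := by
    subst hb hx
    simp only [map_add, map_sum, map_smul, LinearMap.mem_ker.mp hxt]
    have : ∀ i, W (v i) = EuclideanSpace.single i (1 : ℝ) := fun i => by
      rw [hv i, hWWp]
    simp [this]
  have hcoord : ∀ j, (W x + b) j = a j := by
    intro j
    rw [hWx]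
    classical
    rw [WithLp.ofLp_sum, Fintype.sum_apply]
    simp [EuclideanSpace.single_apply]
  intro h
  have h2 : Wp (relu (W x + b)) = 0 := by
    have : trunc W Wp b x = Wp (relu (W x + b)) + Wp (W p) := by
      simp [trunc, hb, map_sub]
    rw [this] at h
    exact add_eq_right.mp h
  have h3 : relu (W x + b) = 0 := by
    have := congrArg W h2
    rwa [hWWp, map_zero] at this
  have h4 : relu (W x + b) i0 = 0 := by rw [h3]; rfl
  have h5 : relu (W x + b) i0 = a i0 := by
    show max ((W x + b) i0) 0 = a i0
    rw [hcoord i0]; exact max_eq_left (le_of_lt hi0)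
  linarith [h4, h5, hi0]
end
end

section
/- Let S ⊂ ℝⁿ be an n-simplex with vertices s₁,…,s_{n+1} contained in an affine hyperplane H' of ℝ^{n+1} (after the standard inclusion ι : ℝⁿ ↪ ℝ^{n+1}), and let p ∈ ℝ^{n+1} be a point not in the affine span of ι(S). Define vᵢ = p − ι(sᵢ) for i = 1,…,n+1. Then the vectors v₁,…,v_{n+1} are linearly independent, ι(S) ⊆ 𝒮₋(p, v) = {p + Σᵢ aᵢ vᵢ : all aᵢ ≤ 0}, and 𝒮₋(p, v) ∩ affineSpan(ι(S)) = ι(S). -/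
noncomputable section

/-- The standard inclusion ι : ℝⁿ → ℝᵐ sending eᵢⁿ to eᵢᵐ (padding with zeros). -/
def incl (n m : ℕ) : EuclideanSpace ℝ (Fin n) →ₗ[ℝ] EuclideanSpace ℝ (Fin m) where
  toFun x := WithLp.toLp 2 (fun i => if h : (i : ℕ) < n then x ⟨i, h⟩ else 0)
  map_add' x y := by ext i; by_cases h : (i : ℕ) < n <;> simp [h]
  map_smul' c x := by ext i; by_cases h : (i : ℕ) < n <;> simp [h]

/-- Membership in the convex hull of the range of a finite family. -/
lemma mem_convexHull_range_iff_aux {ι : Type*} [Fintype ι] {E : Type*} [AddCommGroup E]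
    [Module ℝ E] (s : ι → E) (x : E) :
    x ∈ convexHull ℝ (Set.range s) ↔
      ∃ w : ι → ℝ, (∀ i, 0 ≤ w i) ∧ ∑ i, w i = 1 ∧ x = ∑ i, w i • s i := by
  classical
  constructor
  · intro hx
    rw [convexHull_range_eq_exists_affineCombination] at hx
    obtain ⟨t, w, hw0, hw1, rfl⟩ := hx
    refine ⟨fun i => if i ∈ t then w i else 0, ?_, ?_, ?_⟩
    · intro i
      by_cases h : i ∈ t
      · simpa [h] using hw0 i h
      · simp [h]
    · rw [Finset.sum_ite_mem, Finset.univ_inter, hw1]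
    · rw [t.affineCombination_eq_linear_combination s w hw1, eq_comm]
      simp only [ite_smul, zero_smul]
      rw [Finset.sum_ite_mem, Finset.univ_inter]
  · rintro ⟨w, hw0, hw1, rfl⟩
    rw [← Finset.univ.affineCombination_eq_linear_combination s w hw1]
    exact affineCombination_mem_convexHull (fun i _ => hw0 i) hw1

/-- cone over an included simplex. -/
theorem cone_over_simplex {n : ℕ}
    (s : Fin (n + 1) → EuclideanSpace ℝ (Fin n))
    (hs : AffineIndependent ℝ s)
    (S : Set (EuclideanSpace ℝ (Fin n)))
    (hS : S = convexHull ℝ (Set.range s))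
    (p : EuclideanSpace ℝ (Fin (n + 1)))
    (hp : p ∉ affineSpan ℝ ((incl n (n + 1)) '' S))
    (v : Fin (n + 1) → EuclideanSpace ℝ (Fin (n + 1)))
    (hv : ∀ i, v i = p - incl n (n + 1) (s i))
    (Sminus : Set (EuclideanSpace ℝ (Fin (n + 1))))
    (hSm : Sminus = {y | ∃ a : Fin (n + 1) → ℝ,
      (∀ i, a i ≤ 0) ∧ y = p + ∑ i, a i • v i}) :
    LinearIndependent ℝ v ∧
    (incl n (n + 1)) '' S ⊆ Sminus ∧
    Sminus ∩ (affineSpan ℝ ((incl n (n + 1)) '' S) : Set (EuclideanSpace ℝ (Fin (n + 1))))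
      = (incl n (n + 1)) '' S := by
  classical
  set ι : EuclideanSpace ℝ (Fin n) →ₗ[ℝ] EuclideanSpace ℝ (Fin (n + 1)) := incl n (n + 1) with hι
  have hinj : Function.Injective ι := by
    intro x y h
    ext i
    have := congrArg (fun z => z (Fin.castSucc i)) h
    simpa [ι, incl, i.isLt] using this
  set u : Fin (n + 1) → EuclideanSpace ℝ (Fin (n + 1)) := fun i => ι (s i) with hu
  have huind : AffineIndependent ℝ u := hs.map' ι.toAffineMap hinj
  have hspan : affineSpan ℝ (ι '' S) = affineSpan ℝ (Set.range u) := by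
    rw [hS, ι.image_convexHull, affineSpan_convexHull, ← Set.range_comp]
    rfl
  have hp' : p ∉ affineSpan ℝ (Set.range u) := hspan ▸ hp
  have hvu : ∀ i, v i = p - u i := hv
  -- key algebraic lemma
  have key : ∀ (t : ℝ) (c : Fin (n + 1) → ℝ), t + ∑ i, c i = 0 →
      t • p + ∑ i, c i • u i = 0 → t = 0 ∧ ∀ i, c i = 0 := by
    intro t c hsum heq
    have ht : t = 0 := by
      by_contra ht
      apply hp'
      have hct : ∑ i, c i = -t := by linarith
      have h1 : ∑ i, (-c i / t) = 1 := by
        have : ∑ i, (-c i / t) = (-∑ i, c i) / t := by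
          rw [← Finset.sum_neg_distrib, Finset.sum_div]
        rw [this, hct, neg_neg, div_self ht]
      have hA : ∑ i, c i • u i = -(t • p) := eq_neg_of_add_eq_zero_right heq
      have h2 : p = ∑ i, (-c i / t) • u i := by
        calc p = (-t⁻¹) • (-(t • p)) := by
              rw [smul_neg, neg_smul, neg_neg, smul_smul, inv_mul_cancel₀ ht, one_smul]
          _ = (-t⁻¹) • ∑ i, c i • u i := by rw [hA]
          _ = ∑ i, (-c i / t) • u i := by
              rw [Finset.smul_sum]
              refine Finset.sum_congr rfl fun i _ => ?_
              rw [smul_smul]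
              congr 1
              field_simp
      rw [h2, ← Finset.univ.affineCombination_eq_linear_combination u _ h1]
      exact affineCombination_mem_affineSpan h1 u
    subst ht
    refine ⟨rfl, fun i => ?_⟩
    have hc : ∑ i, c i = 0 := by simpa using hsum
    have hcu : ∑ i, c i • u i = 0 := by simpa using heq
    exact affineIndependent_iff.mp huind Finset.univ c hc hcu i (Finset.mem_univ i)
  have hexpand : ∀ c : Fin (n + 1) → ℝ,
      ∑ i, c i • v i = (∑ i, c i) • p + ∑ i, (-c i) • u i := by
    intro c
    simp only [hvu, smul_sub, neg_smul, Finset.sum_sub_distrib, Finset.sum_neg_distrib,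
      Finset.sum_smul]
    abel
  -- Part 1: linear independence
  have hli : LinearIndependent ℝ v := by
    rw [Fintype.linearIndependent_iff]
    intro c hc
    rw [hexpand c] at hc
    intro i
    have := (key (∑ i, c i) (fun i => -c i) (by simp) hc).2 i
    simpa using this
  -- Part 2: inclusion
  have hsub : ι '' S ⊆ Sminus := by
    rintro _ ⟨x, hx, rfl⟩
    rw [hS, mem_convexHull_range_iff_aux] at hx
    obtain ⟨w, hw0, hw1, rfl⟩ := hx
    rw [hSm]
    refine ⟨fun i => -w i, fun i => by simpa using hw0 i, ?_⟩
    have hιx : ι (∑ i, w i • s i) = ∑ i, w i • u i := by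
      simp only [map_sum, map_smul]
      rfl
    rw [hιx, hexpand fun i => -w i]
    simp only [neg_neg, Finset.sum_neg_distrib, hw1, neg_one_smul]
    abel
  refine ⟨hli, hsub, ?_⟩
  -- Part 3: intersection
  apply Set.Subset.antisymm
  · rintro y ⟨hy1, hy2⟩
    rw [hSm] at hy1
    obtain ⟨a, ha, rfl⟩ := hy1
    rw [hspan] at hy2
    obtain ⟨w, hw1, hyw⟩ := eq_affineCombination_of_mem_affineSpan_of_fintype hy2
    rw [Finset.univ.affineCombination_eq_linear_combination u w hw1] at hyw
    have heq : (1 + ∑ i, a i) • p + ∑ i, (-a i - w i) • u i = 0 := by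
      have h0 : p + ∑ i, a i • v i - ∑ i, w i • u i = 0 := by rw [← hyw]; abel
      rw [hexpand a] at h0
      rw [← h0]
      simp only [sub_smul, neg_smul, add_smul, one_smul, Finset.sum_sub_distrib,
        Finset.sum_neg_distrib]
      abel
    have hkey := key (1 + ∑ i, a i) (fun i => -a i - w i) (by
      simp only [Finset.sum_sub_distrib, Finset.sum_neg_distrib]
      linarith) heq
    have hwa : ∀ i, w i = -a i := fun i => by have := hkey.2 i; linarith
    have hw0 : ∀ i, 0 ≤ w i := fun i => by rw [hwa i]; linarith [ha i]
    refine ⟨∑ i, w i • s i, ?_, ?_⟩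
    · rw [hS, mem_convexHull_range_iff_aux]
      exact ⟨w, hw0, hw1, rfl⟩
    · rw [hyw, map_sum]
      simp only [map_smul]
      rfl
  · intro y hy
    exact ⟨hsub hy, subset_affineSpan ℝ _ hy⟩
end
end
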